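/- Let λ0 ∈ (−2,2), x_+ = √(4 − λ0²)/2, and define V(t, λ0) = t²/2 + i λ0 t/2 − Log(t − i λ0/2) − (4 − λ0²)/8, where Log is the principal branch of the complex logarithm. Then V(x_+, λ0) = i ( λ0 √(4 − λ0²) / 4 + arcsin(λ0/2) ); in particular Re V(x_+, λ0) = 0. -/
import Mathlib


noncomputable section

/-- `V(t, λ₀) = t²/2 + iλ₀t/2 − Log(t − iλ₀/2) − (4 − λ₀²)/8`, with `Log` the principal
branch of the complex logarithm. -/
def Vfun (l0 : ℝ) (t : ℂ) : ℂ :=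
  t ^ 2 / 2 + Complex.I * l0 * t / 2 - Complex.log (t - Complex.I * l0 / 2) -
    ((4 - l0 ^ 2) / 8 : ℝ)

/-- The saddle point `x₊ = √(4 − λ₀²)/2`. -/
def xPlus (l0 : ℝ) : ℝ := Real.sqrt (4 - l0 ^ 2) / 2

/-- The value of `V` at the saddle point `x₊` is purely imaginary. -/
theorem Vfun_at_saddle (l0 : ℝ) (hl0 : l0 ∈ Set.Ioo (-2 : ℝ) 2) :
    Vfun l0 (xPlus l0 : ℝ) =
        Complex.I * ((l0 * Real.sqrt (4 - l0 ^ 2) / 4 + Real.arcsin (l0 / 2) : ℝ)) ∧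
      (Vfun l0 (xPlus l0 : ℝ)).re = 0 := by
  obtain ⟨h1, h2⟩ := hl0
  have h4 : (0:ℝ) ≤ 4 - l0 ^ 2 := by nlinarith
  have hs : Real.sqrt (4 - l0 ^ 2) ^ 2 = 4 - l0 ^ 2 := Real.sq_sqrt h4
  have ha1 : (-1:ℝ) ≤ l0 / 2 := by linarith
  have ha2 : l0 / 2 ≤ 1 := by linarith
  -- cos (arcsin (l0/2)) = sqrt(4 - l0²)/2
  have hcos : Real.cos (Real.arcsin (l0 / 2)) = Real.sqrt (4 - l0 ^ 2) / 2 := by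
    rw [Real.cos_arcsin]
    rw [show (1:ℝ) - (l0 / 2) ^ 2 = (4 - l0 ^ 2) / 4 by ring]
    rw [Real.sqrt_div h4, show (4:ℝ) = 2 ^ 2 by norm_num, Real.sqrt_sq (by norm_num : (0:ℝ) ≤ 2)]
  have hsin : Real.sin (Real.arcsin (l0 / 2)) = l0 / 2 := Real.sin_arcsin ha1 ha2
  -- the point is exp(-arcsin(l0/2) * I)
  have hexp : ((xPlus l0 : ℝ) : ℂ) - Complex.I * l0 / 2 =
      Complex.exp ((-(Real.arcsin (l0 / 2)) : ℝ) * Complex.I) := by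
    rw [Complex.exp_mul_I]
    rw [show ((-(Real.arcsin (l0 / 2)) : ℝ) : ℂ) = -((Real.arcsin (l0 / 2) : ℝ) : ℂ) by
      push_cast; ring]
    rw [Complex.cos_neg, Complex.sin_neg, ← Complex.ofReal_cos, ← Complex.ofReal_sin,
      hcos, hsin]
    simp only [xPlus]
    push_cast
    ring
  have hlog : Complex.log (((xPlus l0 : ℝ) : ℂ) - Complex.I * l0 / 2) =
      (-(Real.arcsin (l0 / 2)) : ℝ) * Complex.I := by
    rw [hexp, Complex.log_exp]
    · simp only [Complex.mul_I_im, Complex.ofReal_re]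
      have := Real.arcsin_le_pi_div_two (l0 / 2)
      have := Real.pi_gt_three
      linarith
    · simp only [Complex.mul_I_im, Complex.ofReal_re]
      have := Real.neg_pi_div_two_le_arcsin (l0 / 2)
      have := Real.pi_gt_three
      linarith
  have hmain : Vfun l0 (xPlus l0 : ℝ) =
      Complex.I * ((l0 * Real.sqrt (4 - l0 ^ 2) / 4 + Real.arcsin (l0 / 2) : ℝ)) := by
    rw [Vfun, hlog]
    simp only [xPlus]
    have hsC : ((Real.sqrt (4 - l0 ^ 2) : ℝ) : ℂ) ^ 2 = 4 - (l0 : ℂ) ^ 2 := by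
      rw [show ((Real.sqrt (4 - l0 ^ 2) : ℝ) : ℂ) ^ 2 = (((Real.sqrt (4 - l0 ^ 2)) ^ 2 : ℝ) : ℂ) by push_cast; ring, hs]
      push_cast; ring
    push_cast
    linear_combination hsC / 8
  exact ⟨hmain, by rw [hmain]; simp [Complex.mul_re]⟩

end
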